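/- Weighted Sobolev embedding ((2.1), case p = 2): There exists a constant C > 0 such that for every continuously differentiable function F : [0,1] → ℝ, ∫_{0}^{1} F(x)² dx ≤ C ∫_{0}^{1} d(x)² ( F(x)² + F'(x)² ) dx. -/

import Mathlib

open Set MeasureTheory intervalIntegral

/-- FTC for `φ * F^2` with one-sided differentiability at the endpoints of `[0,1]`. -/
private lemma ftc_aux {F f' : ℝ → ℝ} (hFc : ContinuousOn F (Set.Icc 0 1))
    (hf'c : ContinuousOn f' (Set.Icc 0 1))
    (hd : ∀ x ∈ Set.Ioo (0:ℝ) 1, HasDerivAt F (f' x) x)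
    {φ φ' : ℝ → ℝ} (hφ : ∀ x, HasDerivAt φ (φ' x) x) (hφ'c : Continuous φ')
    {a b : ℝ} (h0 : 0 ≤ a) (hab : a ≤ b) (hb1 : b ≤ 1) :
    ∫ x in a..b, (φ' x * F x ^ 2 + φ x * (2 * F x * f' x))
      = φ b * F b ^ 2 - φ a * F a ^ 2 := by
  have hsub : Set.Icc a b ⊆ Set.Icc (0:ℝ) 1 := Set.Icc_subset_Icc h0 hb1
  have hφc : Continuous φ := by
    rw [continuous_iff_continuousAt]; exact fun x => (hφ x).continuousAt
  apply intervalIntegral.integral_eq_sub_of_hasDeriv_right_of_le hab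
  · exact (hφc.continuousOn.mul ((hFc.mono hsub).pow 2))
  · intro x hx
    have hx01 : x ∈ Set.Ioo (0:ℝ) 1 := ⟨lt_of_le_of_lt h0 hx.1, lt_of_lt_of_le hx.2 hb1⟩
    have H := (hφ x).mul ((hd x hx01).pow 2)
    have H' : HasDerivAt (fun y => φ y * F y ^ 2)
        (φ' x * F x ^ 2 + φ x * (2 * F x * f' x)) x := by
      exact H.congr_deriv (by simp only [Pi.pow_apply, Nat.add_one_sub_one, pow_one]; push_cast; ring)
    exact H'.hasDerivWithinAt
  · apply ContinuousOn.intervalIntegrable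
    rw [Set.uIcc_of_le hab]
    exact ((hφ'c.continuousOn.mul ((hFc.mono hsub).pow 2)).add
      (hφc.continuousOn.mul ((continuousOn_const.mul (hFc.mono hsub)).mul (hf'c.mono hsub))))

set_option maxHeartbeats 1000000 in
/-- Weighted Sobolev embedding ((2.1), case p = 2). -/
theorem weighted_sobolev_embedding :
    ∃ C : ℝ, 0 < C ∧ ∀ F : ℝ → ℝ, ContDiffOn ℝ 1 F (Set.Icc 0 1) →
      (∫ x in (0:ℝ)..1, (F x) ^ 2) ≤
        C * ∫ x in (0:ℝ)..1,
          (min x (1 - x)) ^ 2 * ((F x) ^ 2 + (derivWithin F (Set.Icc 0 1) x) ^ 2) := by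
  refine ⟨100, by norm_num, fun F hF => ?_⟩
  set f' : ℝ → ℝ := derivWithin F (Set.Icc 0 1) with hf'def
  have hFc : ContinuousOn F (Set.Icc 0 1) := hF.continuousOn
  have hUD : UniqueDiffOn ℝ (Set.Icc (0:ℝ) 1) := uniqueDiffOn_Icc (by norm_num)
  have hf'c : ContinuousOn f' (Set.Icc 0 1) := hF.continuousOn_derivWithin hUD le_rfl
  have hd : ∀ x ∈ Set.Ioo (0:ℝ) 1, HasDerivAt F (f' x) x := by
    intro x hx
    exact ((hF.differentiableOn (by norm_num) x (Set.Ioo_subset_Icc_self hx)).hasDerivWithinAt).hasDerivAt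
      (Icc_mem_nhds hx.1 hx.2)
  -- continuity of the various integrands
  have hminc : Continuous (fun x : ℝ => min x (1 - x)) :=
    continuous_id.min (continuous_const.sub continuous_id)
  have hwc : ContinuousOn (fun x => (min x (1 - x)) ^ 2 * (F x ^ 2 + f' x ^ 2))
      (Set.Icc (0:ℝ) 1) :=
    ((hminc.pow 2).continuousOn).mul ((hFc.pow 2).add (hf'c.pow 2))
  have hF2c : ContinuousOn (fun x => F x ^ 2) (Set.Icc (0:ℝ) 1) := hFc.pow 2
  have hsumc : ContinuousOn (fun x => F x ^ 2 + f' x ^ 2) (Set.Icc (0:ℝ) 1) :=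
    (hFc.pow 2).add (hf'c.pow 2)
  -- integrability helper
  have ii : ∀ {g : ℝ → ℝ}, ContinuousOn g (Set.Icc 0 1) → ∀ {a b : ℝ},
      0 ≤ a → a ≤ b → b ≤ 1 → IntervalIntegrable g volume a b := by
    intro g hg a b h0 hab hb1
    apply ContinuousOn.intervalIntegrable
    rw [Set.uIcc_of_le hab]
    exact hg.mono (Set.Icc_subset_Icc h0 hb1)
  set W : ℝ := ∫ x in (0:ℝ)..1, (min x (1 - x)) ^ 2 * (F x ^ 2 + f' x ^ 2) with hW
  set M : ℝ := F (1/2) ^ 2 with hM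
  -- left half
  have EqA : ∫ x in (0:ℝ)..(1/2), (1 * F x ^ 2 + x * (2 * F x * f' x))
      = (1/2) * F (1/2) ^ 2 - 0 * F 0 ^ 2 := by
    exact ftc_aux hFc hf'c hd (φ := fun x => x) (φ' := fun _ => 1)
      (fun x => hasDerivAt_id x) continuous_const le_rfl (by norm_num) (by norm_num)
  have IneqA : ∫ x in (0:ℝ)..(1/2),
      ((1/2) * F x ^ 2 - 2 * ((min x (1 - x)) ^ 2 * (F x ^ 2 + f' x ^ 2)))
      ≤ ∫ x in (0:ℝ)..(1/2), (1 * F x ^ 2 + x * (2 * F x * f' x)) := by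
    apply intervalIntegral.integral_mono_on (by norm_num)
    · exact ((ii hF2c le_rfl (by norm_num) (by norm_num)).const_mul _).sub
        ((ii hwc le_rfl (by norm_num) (by norm_num)).const_mul _)
    · exact (ii ((continuousOn_const.mul hF2c).add
        ((continuousOn_id.mul ((continuousOn_const.mul hFc).mul hf'c))))
        le_rfl (by norm_num) (by norm_num))
    · intro x hx
      have hm : min x (1 - x) = x := min_eq_left (by linarith [hx.2])
      rw [hm]
      nlinarith [sq_nonneg (F x + 2 * x * f' x), sq_nonneg (x * F x)]
  have hsplitA : ∫ x in (0:ℝ)..(1/2),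
      ((1/2) * F x ^ 2 - 2 * ((min x (1 - x)) ^ 2 * (F x ^ 2 + f' x ^ 2)))
      = (1/2) * (∫ x in (0:ℝ)..(1/2), F x ^ 2)
        - 2 * ∫ x in (0:ℝ)..(1/2), (min x (1 - x)) ^ 2 * (F x ^ 2 + f' x ^ 2) := by
    rw [intervalIntegral.integral_sub, intervalIntegral.integral_const_mul,
      intervalIntegral.integral_const_mul]
    · exact (ii hF2c le_rfl (by norm_num) (by norm_num)).const_mul _
    · exact (ii hwc le_rfl (by norm_num) (by norm_num)).const_mul _
  have HA : (∫ x in (0:ℝ)..(1/2), F x ^ 2)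
      ≤ M + 4 * ∫ x in (0:ℝ)..(1/2), (min x (1 - x)) ^ 2 * (F x ^ 2 + f' x ^ 2) := by
    rw [hsplitA, EqA] at IneqA; simp only [hM]; linarith
  -- right half
  have EqB : ∫ x in (1/2:ℝ)..1, ((-1) * F x ^ 2 + (1 - x) * (2 * F x * f' x))
      = (1 - 1) * F 1 ^ 2 - (1 - 1/2) * F (1/2) ^ 2 := by
    exact ftc_aux hFc hf'c hd (φ := fun x => 1 - x) (φ' := fun _ => -1)
      (fun x => (hasDerivAt_id x).const_sub 1) continuous_const (by norm_num) (by norm_num) le_rfl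
  have IneqB : ∫ x in (1/2:ℝ)..1, ((-1) * F x ^ 2 + (1 - x) * (2 * F x * f' x))
      ≤ ∫ x in (1/2:ℝ)..1,
        (2 * ((min x (1 - x)) ^ 2 * (F x ^ 2 + f' x ^ 2)) - (1/2) * F x ^ 2) := by
    apply intervalIntegral.integral_mono_on (by norm_num)
    · exact (ii ((continuousOn_const.mul hF2c).add
        (((continuousOn_const.sub continuousOn_id).mul
          ((continuousOn_const.mul hFc).mul hf'c)))) (by norm_num) (by norm_num) le_rfl)
    · exact ((ii hwc (by norm_num) (by norm_num) le_rfl).const_mul _).sub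
        ((ii hF2c (by norm_num) (by norm_num) le_rfl).const_mul _)
    · intro x hx
      have hm : min x (1 - x) = 1 - x := min_eq_right (by linarith [hx.1])
      rw [hm]
      nlinarith [sq_nonneg (F x - 2 * (1 - x) * f' x), sq_nonneg ((1 - x) * F x)]
  have hsplitB : ∫ x in (1/2:ℝ)..1,
      (2 * ((min x (1 - x)) ^ 2 * (F x ^ 2 + f' x ^ 2)) - (1/2) * F x ^ 2)
      = 2 * (∫ x in (1/2:ℝ)..1, (min x (1 - x)) ^ 2 * (F x ^ 2 + f' x ^ 2))
        - (1/2) * ∫ x in (1/2:ℝ)..1, F x ^ 2 := by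
    rw [intervalIntegral.integral_sub, intervalIntegral.integral_const_mul,
      intervalIntegral.integral_const_mul]
    · exact (ii hwc (by norm_num) (by norm_num) le_rfl).const_mul _
    · exact (ii hF2c (by norm_num) (by norm_num) le_rfl).const_mul _
  have HB : (∫ x in (1/2:ℝ)..1, F x ^ 2)
      ≤ M + 4 * ∫ x in (1/2:ℝ)..1, (min x (1 - x)) ^ 2 * (F x ^ 2 + f' x ^ 2) := by
    rw [hsplitB, EqB] at IneqB; simp only [hM]; nlinarith [IneqB]
  -- midpoint bound
  set J : ℝ := ∫ x in (1/4:ℝ)..(3/4), (F x ^ 2 + f' x ^ 2) with hJ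
  have hJF : (∫ x in (1/4:ℝ)..(3/4), F x ^ 2) ≤ J := by
    apply intervalIntegral.integral_mono_on (by norm_num)
      (ii hF2c (by norm_num) (by norm_num) (by norm_num))
      (ii hsumc (by norm_num) (by norm_num) (by norm_num))
    intro x _; nlinarith [sq_nonneg (f' x)]
  obtain ⟨y, hy, hymin⟩ := (isCompact_Icc (a := (1/4:ℝ)) (b := 3/4)).exists_isMinOn
    (Set.nonempty_Icc.2 (by norm_num))
    ((hFc.mono (Set.Icc_subset_Icc (by norm_num) (by norm_num))).pow 2)
  have hy14 : (1/4:ℝ) ≤ y := hy.1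
  have hy34 : y ≤ (3/4:ℝ) := hy.2
  have hy2 : F y ^ 2 ≤ 2 * ∫ t in (1/4:ℝ)..(3/4), F t ^ 2 := by
    have h1 : (∫ _t in (1/4:ℝ)..(3/4), F y ^ 2) ≤ ∫ t in (1/4:ℝ)..(3/4), F t ^ 2 := by
      apply intervalIntegral.integral_mono_on (by norm_num) intervalIntegrable_const
        (ii hF2c (by norm_num) (by norm_num) (by norm_num))
      intro t ht; exact isMinOn_iff.1 hymin t ht
    rw [intervalIntegral.integral_const] at h1
    have : ((3/4 : ℝ) - 1/4) • F y ^ 2 = (1/2) * F y ^ 2 := by norm_num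
    rw [this] at h1; linarith
  -- |∫ 2 F f'| over a subinterval of [1/4,3/4] is bounded by J
  have K : ∀ c d : ℝ, 1/4 ≤ c → c ≤ d → d ≤ 3/4 →
      |∫ x in c..d, (0 * F x ^ 2 + 1 * (2 * F x * f' x))| ≤ J := by
    intro c d hc hcd hd34
    have h1 : |∫ x in c..d, (0 * F x ^ 2 + 1 * (2 * F x * f' x))|
        ≤ ∫ x in c..d, |0 * F x ^ 2 + 1 * (2 * F x * f' x)| :=
      intervalIntegral.abs_integral_le_integral_abs hcd
    have h2 : (∫ x in c..d, |0 * F x ^ 2 + 1 * (2 * F x * f' x)|)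
        ≤ ∫ x in c..d, (F x ^ 2 + f' x ^ 2) := by
      apply intervalIntegral.integral_mono_on hcd
      · exact (ii ((continuousOn_const.mul hF2c).add
          (continuousOn_const.mul ((continuousOn_const.mul hFc).mul hf'c)))
          (by linarith) hcd (by linarith)).abs
      · exact ii hsumc (by linarith) hcd (by linarith)
      · intro x _
        rw [abs_le]
        constructor <;> nlinarith [sq_nonneg (F x + f' x), sq_nonneg (F x - f' x)]
    have h3 : (∫ x in c..d, (F x ^ 2 + f' x ^ 2)) ≤ J := by
      apply intervalIntegral.integral_mono_interval hc hcd hd34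
      · exact Filter.Eventually.of_forall (fun x => by positivity)
      · exact ii hsumc (by norm_num) (by norm_num) (by norm_num)
    linarith
  have hMJ : M ≤ 3 * J := by
    rcases le_or_gt y (1/2) with hle | hlt
    · have Eq : ∫ x in y..(1/2), (0 * F x ^ 2 + 1 * (2 * F x * f' x))
          = 1 * F (1/2) ^ 2 - 1 * F y ^ 2 :=
        ftc_aux hFc hf'c hd (φ := fun _ => 1) (φ' := fun _ => 0)
          (fun x => hasDerivAt_const x 1) continuous_const (by linarith) hle (by norm_num)
      have := K y (1/2) hy14 hle (by norm_num)
      rw [Eq] at this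
      have habs := abs_le.1 this
      simp only [hM]; nlinarith [habs.2, hy2, hJF]
    · have Eq : ∫ x in (1/2:ℝ)..y, (0 * F x ^ 2 + 1 * (2 * F x * f' x))
          = 1 * F y ^ 2 - 1 * F (1/2) ^ 2 :=
        ftc_aux hFc hf'c hd (φ := fun _ => 1) (φ' := fun _ => 0)
          (fun x => hasDerivAt_const x 1) continuous_const (by norm_num) hlt.le (by linarith)
      have := K (1/2) y (by norm_num) hlt.le hy34
      rw [Eq] at this
      have habs := abs_le.1 this
      simp only [hM]; nlinarith [habs.1, hy2, hJF]
  have hJW : J ≤ 16 * ∫ x in (1/4:ℝ)..(3/4), (min x (1 - x)) ^ 2 * (F x ^ 2 + f' x ^ 2) := by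
    have h1 : J ≤ ∫ x in (1/4:ℝ)..(3/4),
        16 * ((min x (1 - x)) ^ 2 * (F x ^ 2 + f' x ^ 2)) := by
      apply intervalIntegral.integral_mono_on (by norm_num)
        (ii hsumc (by norm_num) (by norm_num) (by norm_num))
        ((ii hwc (by norm_num) (by norm_num) (by norm_num)).const_mul _)
      intro x hx
      have h14 : (1/4:ℝ) ≤ min x (1 - x) := le_min hx.1 (by linarith [hx.2])
      nlinarith [sq_nonneg (F x), sq_nonneg (f' x), sq_nonneg (min x (1 - x) - 1/4)]
    rwa [intervalIntegral.integral_const_mul] at h1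
  have hsubW : (∫ x in (1/4:ℝ)..(3/4), (min x (1 - x)) ^ 2 * (F x ^ 2 + f' x ^ 2)) ≤ W := by
    apply intervalIntegral.integral_mono_interval (by norm_num) (by norm_num) (by norm_num)
    · exact Filter.Eventually.of_forall (fun x => by positivity)
    · exact ii hwc le_rfl (by norm_num) (by norm_num)
  have hMW : M ≤ 48 * W := by linarith
  -- combine
  have hsplitF : (∫ x in (0:ℝ)..1, F x ^ 2)
      = (∫ x in (0:ℝ)..(1/2), F x ^ 2) + ∫ x in (1/2:ℝ)..1, F x ^ 2 :=
    (intervalIntegral.integral_add_adjacent_intervals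
      (ii hF2c le_rfl (by norm_num) (by norm_num))
      (ii hF2c (by norm_num) (by norm_num) le_rfl)).symm
  have hsplitW : W
      = (∫ x in (0:ℝ)..(1/2), (min x (1 - x)) ^ 2 * (F x ^ 2 + f' x ^ 2))
        + ∫ x in (1/2:ℝ)..1, (min x (1 - x)) ^ 2 * (F x ^ 2 + f' x ^ 2) :=
    (intervalIntegral.integral_add_adjacent_intervals
      (ii hwc le_rfl (by norm_num) (by norm_num))
      (ii hwc (by norm_num) (by norm_num) le_rfl)).symm
  rw [hsplitF]
  linarith [HA, HB, hMW, hsplitW]
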